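/- arXiv:2506.22228 — 3 statements merged into one kernel-verified Lean document; each statement's English description precedes it below -/
import Mathlib

section
/- Consider the discrete circle P_n partitioned into M blocks of consecutive indices, and for S_0 > 0 let F = {(k,ℓ) : k ≠ ℓ, x_k ∼ x_ℓ, S_0·‖x_k−x_ℓ‖ ≤ 1} be the set of ordered same-block pairs at Euclidean distance at most 1/S_0. There exist constants c_1, C_1 > 0 and N such that for all n ≥ N, all M dividing n with M ≥ 3, and all S_0 with M ≤ S_0 ≤ n/10, one has c_1·n²/S_0 ≤ |F| ≤ C_1·n²/S_0. -/
open Real Finset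

/-- The `i`-th point of the discrete circle `P_n ⊂ ℝ²`:
`x_i = (cos(2πi/n), sin(2πi/n))`. -/
noncomputable def circlePt (n : ℕ) (i : Fin n) : EuclideanSpace ℝ (Fin 2) :=
  WithLp.toLp 2 fun j => if j = 0 then Real.cos (2 * Real.pi * (i.val : ℝ) / n)
           else Real.sin (2 * Real.pi * (i.val : ℝ) / n)

/-- With the indices `{0, …, n−1}` partitioned into `M` blocks of `n/M` consecutive indices,
`i ∼ j` iff `i` and `j` lie in the same block. -/
def sameBlock (n M : ℕ) (i j : Fin n) : Prop :=
  i.val / (n / M) = j.val / (n / M)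

instance (n M : ℕ) (i j : Fin n) : Decidable (sameBlock n M i j) := by
  unfold sameBlock; infer_instance

/-- The set `F` of ordered same-block pairs of distinct indices whose circle points are at
Euclidean distance at most `1/S₀`. -/
noncomputable def closeSameBlockPairs (n M : ℕ) (S₀ : ℝ) : Finset (Fin n × Fin n) :=
  Finset.univ.filter (fun p : Fin n × Fin n =>
    p.1 ≠ p.2 ∧ sameBlock n M p.1 p.2 ∧
      S₀ * ‖circlePt n p.1 - circlePt n p.2‖ ≤ 1)

lemma norm_circlePt (n : ℕ) (i j : Fin n) :
    ‖circlePt n i - circlePt n j‖ = 2 * |Real.sin (Real.pi * ((i.val : ℝ) - j.val) / n)| := by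
  have hsub : ∀ k : Fin 2, (circlePt n i - circlePt n j) k = circlePt n i k - circlePt n j k :=
    fun k => rfl
  rw [EuclideanSpace.norm_eq, Fin.sum_univ_two]
  simp only [hsub, circlePt]
  norm_num
  set a := 2 * Real.pi * (i.val : ℝ) / n
  set b := 2 * Real.pi * (j.val : ℝ) / n
  have hab : Real.pi * ((i.val : ℝ) - j.val) / n = (a - b) / 2 := by
    simp only [a, b]; ring
  rw [hab]
  have key : (Real.cos a - Real.cos b) ^ 2 + (Real.sin a - Real.sin b) ^ 2
      = (2 * Real.sin ((a - b) / 2)) ^ 2 := by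
    have h1 : Real.cos (a - b) = 2 * Real.cos ((a - b) / 2) ^ 2 - 1 := by
      rw [← Real.cos_two_mul]; ring_nf
    have h2 := Real.cos_sub a b
    nlinarith [Real.sin_sq_add_cos_sq a, Real.sin_sq_add_cos_sq b,
      Real.sin_sq_add_cos_sq ((a - b) / 2)]
  rw [key, Real.sqrt_sq_eq_abs, abs_mul]
  norm_num

/-- Same block implies index distance less than the block size. -/
lemma sameBlock_dist {n M : ℕ} {i j : Fin n} (hB : 0 < n / M) (h : sameBlock n M i j) :
    |(i.val : ℤ) - j.val| < (n / M : ℕ) := by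
  set B := n / M with hBdef
  have hi := Nat.div_add_mod i.val B
  have hj := Nat.div_add_mod j.val B
  have hmi : i.val % B < B := Nat.mod_lt _ hB
  have hmj : j.val % B < B := Nat.mod_lt _ hB
  unfold sameBlock at h
  rw [← hBdef] at h
  rw [h] at hi
  rw [Int.abs_eq_natAbs]
  omega

/-- Key upper estimate: a pair in `F` has small index distance. -/
lemma dist_le_of_mem {n M : ℕ} {S₀ : ℝ} (hn : 0 < n) (hM : 3 ≤ M) (hMn : M ∣ n)
    (hS : 0 < S₀) {i j : Fin n}
    (hij : (i, j) ∈ closeSameBlockPairs n M S₀) :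
    |(i.val : ℝ) - j.val| ≤ (n : ℝ) / (4 * S₀) := by
  simp only [closeSameBlockPairs, Finset.mem_filter] at hij
  obtain ⟨-, -, hblk, hnorm⟩ := hij
  have hMpos : 0 < M := by omega
  have hB : 0 < n / M := Nat.div_pos (Nat.le_of_dvd hn hMn) hMpos
  have hd : |(i.val : ℤ) - j.val| < (n / M : ℕ) := sameBlock_dist hB hblk
  have hM0 : (M : ℝ) ≠ 0 := by positivity
  have hBcast : ((n / M : ℕ) : ℝ) = (n : ℝ) / M := by
    rw [Nat.cast_div hMn hM0]
  have hnR : (0 : ℝ) < n := by exact_mod_cast hn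
  have hBn : ((n / M : ℕ) : ℝ) ≤ (n : ℝ) / 3 := by
    rw [hBcast]
    have hM3 : (3 : ℝ) ≤ M := by exact_mod_cast hM
    apply div_le_div_of_nonneg_left hnR.le (by norm_num) hM3
  set x : ℝ := (i.val : ℝ) - j.val with hx
  have hdR : |x| ≤ (n : ℝ) / 3 := by
    have h2 : (|(i.val : ℤ) - j.val| : ℝ) < ((n / M : ℕ) : ℝ) := by
      exact_mod_cast Int.cast_lt.mpr hd
    push_cast at h2
    calc |x| ≤ ((n / M : ℕ) : ℝ) := by rw [hx]; linarith
    _ ≤ (n : ℝ) / 3 := hBn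
  have hyabs : |Real.pi * x / n| = Real.pi * |x| / n := by
    rw [abs_div, abs_mul, abs_of_nonneg Real.pi_nonneg, abs_of_nonneg hnR.le]
  have hy2 : |Real.pi * x / n| ≤ Real.pi / 2 := by
    rw [hyabs]
    rw [div_le_div_iff₀ hnR (by norm_num : (0:ℝ) < 2)]
    nlinarith [Real.pi_pos]
  have hsin := Real.mul_abs_le_abs_sin hy2
  rw [hyabs] at hsin
  have hsin' : 2 * |x| / n ≤ |Real.sin (Real.pi * x / n)| := by
    have hpi := Real.pi_pos
    calc 2 * |x| / n = 2 / Real.pi * (Real.pi * |x| / n) := by field_simp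
    _ ≤ _ := hsin
  rw [norm_circlePt] at hnorm
  rw [← hx] at hnorm
  rw [le_div_iff₀ (by positivity : (0:ℝ) < 4 * S₀)]
  have h6 : S₀ * (4 * |x|) / n ≤ 1 := by
    calc S₀ * (4 * |x|) / n = S₀ * (2 * (2 * |x| / n)) := by ring
    _ ≤ S₀ * (2 * |Real.sin (Real.pi * x / n)|) :=
        mul_le_mul_of_nonneg_left (by linarith) hS.le
    _ ≤ 1 := hnorm
  have h7 := (div_le_one hnR).1 h6
  nlinarith

/-- Fiber counting for the upper bound. -/
lemma fiber_card_le {n M : ℕ} {S₀ : ℝ} (hn : 0 < n) (hM : 3 ≤ M) (hMn : M ∣ n)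
    (hS : 0 < S₀) (i : Fin n) :
    ((closeSameBlockPairs n M S₀).filter (fun p => p.1 = i)).card
      ≤ 2 * ⌊(n : ℝ) / (4 * S₀)⌋₊ := by
  set K : ℕ := ⌊(n : ℝ) / (4 * S₀)⌋₊
  have hcard : ((Finset.Icc ((i.val : ℤ) - K) ((i.val : ℤ) + K)).erase (i.val : ℤ)).card
      = 2 * K := by
    rw [Finset.card_erase_of_mem (by simp only [Finset.mem_Icc]; omega), Int.card_Icc]
    omega
  rw [← hcard]
  apply Finset.card_le_card_of_injOn (fun p => (p.2.val : ℤ))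
  · intro p hp
    rw [Finset.mem_coe, Finset.mem_filter] at hp
    obtain ⟨hpF, hp1⟩ := hp
    have hpF' := hpF
    rw [closeSameBlockPairs, Finset.mem_filter] at hpF'
    obtain ⟨-, hne, -, -⟩ := hpF'
    have hdist : |(p.1.val : ℝ) - p.2.val| ≤ (n : ℝ) / (4 * S₀) := by
      have : (p.1, p.2) ∈ closeSameBlockPairs n M S₀ := by simpa using hpF
      exact dist_le_of_mem hn hM hMn hS this
    have hKd : ((i.val : ℤ) - p.2.val).natAbs ≤ K := by
      apply Nat.le_floor
      rw [hp1] at hdist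
      calc ((((i.val : ℤ) - p.2.val).natAbs : ℕ) : ℝ) = |(i.val : ℝ) - p.2.val| := by
            push_cast [Nat.cast_natAbs]
            try norm_num
      _ ≤ _ := hdist
    have hne2 : p.2.val ≠ i.val := by
      intro h
      exact hne (by rw [hp1]; exact (Fin.val_injective h).symm)
    simp only [Finset.mem_coe, Finset.mem_erase, Finset.mem_Icc]
    omega
  · intro p hp q hq hpq
    simp only [Finset.mem_coe, Finset.mem_filter] at hp hq
    have hval : (p.2.val : ℤ) = q.2.val := hpq
    have h2 : p.2 = q.2 := Fin.val_injective (by exact_mod_cast hval)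
    exact Prod.ext (hp.2.trans hq.2.symm) h2

/-- Lower bound injection. -/
lemma lower_card {n M : ℕ} {S₀ : ℝ} (hn : 0 < n) (hM : 3 ≤ M) (hMn : M ∣ n)
    (hS : 0 < S₀) (hsmall : (⌊(n : ℝ) / (7 * S₀)⌋₊ : ℝ) * (7 * S₀) ≤ n)
    (hKB : ⌊(n : ℝ) / (7 * S₀)⌋₊ ≤ n / M) :
    M * (n / M - ⌊(n : ℝ) / (7 * S₀)⌋₊) * ⌊(n : ℝ) / (7 * S₀)⌋₊
      ≤ (closeSameBlockPairs n M S₀).card := by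
  set K : ℕ := ⌊(n : ℝ) / (7 * S₀)⌋₊ with hK
  set B : ℕ := n / M with hBdef
  have hMB : M * B = n := Nat.mul_div_cancel' hMn
  have hBpos : 0 < B := Nat.div_pos (Nat.le_of_dvd hn hMn) (by omega)
  have hkey : ∀ b r : ℕ, b < M → r < B → b * B + r < n := by
    intro b r hb hr
    calc b * B + r < b * B + B := Nat.add_lt_add_left hr _
    _ = (b + 1) * B := by ring
    _ ≤ M * B := Nat.mul_le_mul_right _ (by omega)
    _ = n := hMB
  have hdiv : ∀ b r : ℕ, r < B → (b * B + r) / B = b := by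
    intro b r hr
    rw [mul_comm, Nat.mul_add_div hBpos, Nat.div_eq_of_lt hr]
    omega
  have hcard : (Finset.range M ×ˢ Finset.range (B - K) ×ˢ Finset.range K).card
      = M * (B - K) * K := by simp [mul_assoc]
  rw [← hcard]
  apply Finset.card_le_card_of_injOn
    (fun t => (⟨(t.1 * B + t.2.1) % n, Nat.mod_lt _ hn⟩,
               ⟨(t.1 * B + t.2.1 + t.2.2 + 1) % n, Nat.mod_lt _ hn⟩))
  · rintro ⟨b, r, g⟩ ht
    simp only [Finset.mem_coe, Finset.mem_product, Finset.mem_range] at ht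
    obtain ⟨hb, hr, hg⟩ := ht
    have hrB : r + g + 1 < B := by omega
    have hlt1 : b * B + r < n := hkey b r hb (by omega)
    have hlt2 : b * B + r + g + 1 < n := by
      have := hkey b (r + g + 1) hb hrB
      omega
    have hm1 : (b * B + r) % n = b * B + r := Nat.mod_eq_of_lt hlt1
    have hm2 : (b * B + r + g + 1) % n = b * B + r + g + 1 := Nat.mod_eq_of_lt hlt2
    rw [Finset.mem_coe, closeSameBlockPairs, Finset.mem_filter]
    refine ⟨Finset.mem_univ _, ?_, ?_, ?_⟩
    · intro h
      have h2 : (b * B + r) % n = (b * B + r + g + 1) % n := by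
        simpa using congrArg Fin.val h
      rw [hm1, hm2] at h2
      omega
    · show (_ % n) / (n / M) = (_ % n) / (n / M)
      rw [hm1, hm2, ← hBdef]
      rw [show b * B + r + g + 1 = b * B + (r + g + 1) by omega,
        hdiv b r (by omega), hdiv b (r + g + 1) hrB]
    · show S₀ * ‖circlePt n _ - circlePt n _‖ ≤ 1
      rw [norm_circlePt]
      dsimp only
      rw [hm1, hm2]
      have hnpos : (0 : ℝ) < n := by exact_mod_cast hn
      have hy : Real.pi * (((b * B + r : ℕ) : ℝ) - ((b * B + r + g + 1 : ℕ) : ℝ)) / n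
          = -(Real.pi * ((g : ℝ) + 1) / n) := by
        push_cast; field_simp; ring
      rw [hy, Real.sin_neg, abs_neg]
      have h1 : |Real.sin (Real.pi * ((g : ℝ) + 1) / n)| ≤ Real.pi * ((g : ℝ) + 1) / n :=
        le_trans Real.abs_sin_le_abs
          (le_of_eq (abs_of_nonneg (by positivity : (0:ℝ) ≤ Real.pi * ((g : ℝ) + 1) / n)))
      have hgK : ((g : ℝ) + 1) ≤ (K : ℝ) := by exact_mod_cast hg
      have h7 : ((g : ℝ) + 1) * (7 * S₀) ≤ (n : ℝ) :=
        le_trans (mul_le_mul_of_nonneg_right hgK (by positivity)) hsmall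
      have h2 : S₀ * (2 * (Real.pi * ((g : ℝ) + 1) / n)) ≤ 1 := by
        rw [show S₀ * (2 * (Real.pi * ((g : ℝ) + 1) / n))
            = (S₀ * (2 * Real.pi * ((g : ℝ) + 1))) / n by ring, div_le_one hnpos]
        nlinarith [Real.pi_lt_d2, mul_nonneg (by positivity : (0:ℝ) ≤ (g:ℝ)+1) hS.le]
      nlinarith [h1, hS, abs_nonneg (Real.sin (Real.pi * ((g : ℝ) + 1) / n))]
  · rintro ⟨b, r, g⟩ ht ⟨b2, r2, g2⟩ ht2 heq
    simp only [Finset.mem_coe, Finset.mem_product, Finset.mem_range] at ht ht2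
    obtain ⟨hb, hr, hg⟩ := ht
    obtain ⟨hb2, hr2, hg2⟩ := ht2
    have hh1 : (b * B + r) % n = (b2 * B + r2) % n := by
      simpa using congrArg (fun q => q.1.val) heq
    have hh2 : (b * B + r + g + 1) % n = (b2 * B + r2 + g2 + 1) % n := by
      simpa using congrArg (fun q => q.2.val) heq
    have hrB : r + g + 1 < B := by omega
    have hrB2 : r2 + g2 + 1 < B := by omega
    have hlt1 : b * B + r < n := hkey b r hb (by omega)
    have hlt12 : b2 * B + r2 < n := hkey b2 r2 hb2 (by omega)
    have hlt2 : b * B + r + g + 1 < n := by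
      have := hkey b (r + g + 1) hb hrB; omega
    have hlt22 : b2 * B + r2 + g2 + 1 < n := by
      have := hkey b2 (r2 + g2 + 1) hb2 hrB2; omega
    rw [Nat.mod_eq_of_lt hlt1, Nat.mod_eq_of_lt hlt12] at hh1
    rw [Nat.mod_eq_of_lt hlt2, Nat.mod_eq_of_lt hlt22] at hh2
    have hbb : b = b2 := by
      have e1 : (b * B + r) / B = b := hdiv b r (by omega)
      have e2 : (b2 * B + r2) / B = b2 := hdiv b2 r2 (by omega)
      rw [← e1, ← e2, hh1]
    subst hbb
    have hrr : r = r2 := Nat.add_left_cancel hh1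
    subst hrr
    have hgg : g = g2 := by omega
    subst hgg
    rfl

/-- For the discrete circle `P_n` partitioned into `M` blocks of consecutive
indices and `F = {(k,ℓ) : k ≠ ℓ, x_k ∼ x_ℓ, S₀‖x_k−x_ℓ‖ ≤ 1}`, there exist constants
`c₁, C₁ > 0` and `N` such that for all `n ≥ N`, all `M ∣ n` with `M ≥ 3`, and all `S₀` with
`M ≤ S₀ ≤ n/10`, one has `c₁·n²/S₀ ≤ |F| ≤ C₁·n²/S₀`. -/
theorem stmt10 :
    ∃ c₁ C₁ : ℝ, 0 < c₁ ∧ 0 < C₁ ∧ ∃ N : ℕ, ∀ n : ℕ, N ≤ n →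
      ∀ M : ℕ, 3 ≤ M → M ∣ n →
      ∀ S₀ : ℝ, (M : ℝ) ≤ S₀ → S₀ ≤ (n : ℝ) / 10 →
        c₁ * ((n : ℝ) ^ 2 / S₀) ≤ ((closeSameBlockPairs n M S₀).card : ℝ) ∧
        ((closeSameBlockPairs n M S₀).card : ℝ) ≤ C₁ * ((n : ℝ) ^ 2 / S₀) := by
  refine ⟨1/30, 1, by norm_num, by norm_num, 30, ?_⟩
  intro n hN M hM3 hMn S₀ hMS hSn
  have hn : 0 < n := by omega
  have hnR : (0 : ℝ) < n := by exact_mod_cast hn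
  have hMR : (3 : ℝ) ≤ (M : ℝ) := by exact_mod_cast hM3
  have hS : 0 < S₀ := lt_of_lt_of_le (by linarith) hMS
  constructor
  · -- lower bound
    set K : ℕ := ⌊(n : ℝ) / (7 * S₀)⌋₊ with hKdef
    set B : ℕ := n / M with hBdef
    have hMB : M * B = n := Nat.mul_div_cancel' hMn
    have hMBR : (M : ℝ) * (B : ℝ) = (n : ℝ) := by exact_mod_cast hMB
    have hfloor : (K : ℝ) ≤ (n : ℝ) / (7 * S₀) := Nat.floor_le (by positivity)
    have hsmall : (K : ℝ) * (7 * S₀) ≤ n := by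
      rw [← div_mul_cancel₀ (n : ℝ) (by positivity : (7:ℝ) * S₀ ≠ 0)]
      exact mul_le_mul_of_nonneg_right hfloor (by positivity)
    have h7K : 7 * (K : ℝ) ≤ (B : ℝ) := by
      have h1 : (n : ℝ) / (7 * S₀) ≤ (n : ℝ) / (7 * M) := by
        apply div_le_div_of_nonneg_left hnR.le (by positivity) (by linarith)
      have h2 : (K : ℝ) ≤ (n : ℝ) / (7 * M) := le_trans hfloor h1
      rw [← hMBR] at h2
      rw [le_div_iff₀ (by positivity : (0:ℝ) < 7 * M)] at h2
      nlinarith [Nat.cast_nonneg (α := ℝ) B, hMR, h2]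
    have hKB : K ≤ B := by
      have : (K : ℝ) ≤ (B : ℝ) := by linarith [Nat.cast_nonneg (α := ℝ) K]
      exact_mod_cast this
    have h10 : 10 * S₀ ≤ (n : ℝ) := by linarith
    have hfl : (n : ℝ) / (7 * S₀) < (K : ℝ) + 1 := Nat.lt_floor_add_one _
    have hfl2 : (n : ℝ) ≤ 7 * (S₀ * K) + 7 * S₀ := by
      rw [div_lt_iff₀ (by positivity : (0:ℝ) < 7 * S₀)] at hfl
      nlinarith
    have h1 : (3/10 : ℝ) * n ≤ 7 * (S₀ * K) := by linarith
    have hcast : ((M * (B - K) * K : ℕ) : ℝ) = (M : ℝ) * ((B : ℝ) - K) * K := by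
      push_cast [Nat.cast_sub hKB]
      ring
    have hlc := lower_card hn hM3 hMn hS hsmall hKB
    have hlcR : (M : ℝ) * ((B : ℝ) - K) * K ≤ ((closeSameBlockPairs n M S₀).card : ℝ) := by
      rw [← hcast]
      exact_mod_cast hlc
    have hKnn : (0:ℝ) ≤ (K : ℝ) := Nat.cast_nonneg _
    have hMBK : (6/7 : ℝ) * n * K ≤ (M : ℝ) * ((B : ℝ) - K) * K := by
      have hBK : (6/7 : ℝ) * B ≤ (B : ℝ) - K := by linarith
      have := mul_le_mul_of_nonneg_right
        (mul_le_mul_of_nonneg_left hBK (by linarith : (0:ℝ) ≤ (M:ℝ))) hKnn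
      calc (6/7 : ℝ) * n * K = (M : ℝ) * ((6/7 : ℝ) * B) * K := by rw [← hMBR]; ring
      _ ≤ _ := this
    have hn2 : (n : ℝ) ^ 2 ≤ (180/7) * S₀ * n * K := by
      have := mul_le_mul_of_nonneg_right h1 hnR.le
      nlinarith
    have hgoal : (1/30 : ℝ) * ((n : ℝ) ^ 2 / S₀) ≤ (6/7 : ℝ) * n * K := by
      rw [show (1/30 : ℝ) * ((n : ℝ) ^ 2 / S₀) = (n : ℝ) ^ 2 / (30 * S₀) by ring,
        div_le_iff₀ (by positivity : (0:ℝ) < 30 * S₀)]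
      nlinarith
    linarith
  · -- upper bound
    set K : ℕ := ⌊(n : ℝ) / (4 * S₀)⌋₊ with hKdef
    have hfib : (closeSameBlockPairs n M S₀).card ≤ n * (2 * K) := by
      rw [Finset.card_eq_sum_card_fiberwise
        (f := Prod.fst) (t := Finset.univ) (fun x _ => Finset.mem_univ _)]
      calc ∑ i ∈ Finset.univ, ((closeSameBlockPairs n M S₀).filter (fun p => p.1 = i)).card
          ≤ ∑ _i ∈ (Finset.univ : Finset (Fin n)), 2 * K :=
            Finset.sum_le_sum (fun i _ => fiber_card_le hn hM3 hMn hS i)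
      _ = n * (2 * K) := by simp [Finset.card_univ, mul_comm]
    have hfloor : (K : ℝ) ≤ (n : ℝ) / (4 * S₀) := Nat.floor_le (by positivity)
    have h2 : ((closeSameBlockPairs n M S₀).card : ℝ) ≤ (n : ℝ) * (2 * ((n : ℝ) / (4 * S₀))) := by
      calc ((closeSameBlockPairs n M S₀).card : ℝ) ≤ ((n * (2 * K) : ℕ) : ℝ) := by
            exact_mod_cast hfib
      _ = (n : ℝ) * (2 * (K : ℝ)) := by push_cast; ring
      _ ≤ (n : ℝ) * (2 * ((n : ℝ) / (4 * S₀))) :=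
            mul_le_mul_of_nonneg_left (by linarith) hnR.le
    rw [one_mul]
    calc ((closeSameBlockPairs n M S₀).card : ℝ) ≤ (n : ℝ) * (2 * ((n : ℝ) / (4 * S₀))) := h2
    _ = (n : ℝ) ^ 2 / (2 * S₀) := by ring
    _ ≤ (n : ℝ) ^ 2 / S₀ :=
        div_le_div_of_nonneg_left (by positivity) hS (by linarith)
end

section
/- There exist a constant C > 0 and N such that for all n ≥ N and all S ≥ 1, Σ ‖x_k−x_ℓ‖^{−2} ≤ C·n²·S, where the sum ranges over all ordered pairs of distinct indices k, ℓ ∈ {1,…,n} with S·‖x_k−x_ℓ‖ > 1 and x_i are the points of the discrete circle P_n. -/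
open Real Finset

noncomputable def hfun (n : ℕ) (S : ℝ) (x : ℕ) : ℝ :=
  if ⌈(n:ℝ)/(2*Real.pi*S)⌉₊ ≤ x then (n:ℝ)^2/(16*(x:ℝ)^2) else 0

lemma hfun_nonneg (n : ℕ) (S : ℝ) (x : ℕ) : 0 ≤ hfun n S x := by
  unfold hfun
  split
  · positivity
  · exact le_refl 0

lemma chord_eq (n : ℕ) (k l : Fin n) :
    ‖circlePt n k - circlePt n l‖ = 2 * |Real.sin (Real.pi * ((k.val : ℝ) - l.val) / n)| := by
  set a := 2 * Real.pi * (k.val : ℝ) / n with ha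
  set b := 2 * Real.pi * (l.val : ℝ) / n with hb
  have hx : ‖circlePt n k - circlePt n l‖ =
      Real.sqrt ((Real.cos a - Real.cos b)^2 + (Real.sin a - Real.sin b)^2) := by
    rw [EuclideanSpace.norm_eq]
    congr 1
    rw [Fin.sum_univ_two]
    simp [circlePt]
    rfl
  have key : (Real.cos a - Real.cos b)^2 + (Real.sin a - Real.sin b)^2
      = (2 * Real.sin ((a - b)/2))^2 := by
    have h1 := Real.cos_sub a b
    have h2 := Real.cos_two_mul ((a-b)/2)
    have h3 := Real.sin_sq_add_cos_sq ((a-b)/2)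
    have h4 := Real.sin_sq_add_cos_sq a
    have h5 := Real.sin_sq_add_cos_sq b
    have h6 : 2 * ((a-b)/2) = a - b := by ring
    rw [h6] at h2
    nlinarith [h1, h2, h3, h4, h5]
  rw [hx, key, Real.sqrt_sq_eq_abs, abs_mul]
  have hab : (a - b)/2 = Real.pi * ((k.val : ℝ) - l.val) / n := by
    rw [ha, hb]; ring
  rw [hab]; norm_num

lemma sumInvSq (D : ℕ) (hD : 1 ≤ D) (n : ℕ) :
    ∑ x ∈ Finset.Icc D n, (((x : ℝ))^2)⁻¹ ≤ 2 / D := by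
  have hDpos : (0:ℝ) < D := by exact_mod_cast hD
  have key : ∀ m, D ≤ m → ∑ x ∈ Finset.Icc D m, (((x : ℝ))^2)⁻¹ ≤ 2 / D - 1 / m := by
    intro m hm
    induction m with
    | zero => omega
    | succ p ih =>
      rcases Nat.lt_or_ge p D with h | h
      · have hDp : D = p + 1 := by omega
        subst hDp
        rw [Finset.Icc_self, Finset.sum_singleton]
        have hp : (0:ℝ) < (p:ℝ) + 1 := by positivity
        rw [show ((p+1:ℕ):ℝ) = (p:ℝ)+1 by push_cast; ring]
        rw [div_sub_div _ _ (ne_of_gt hp) (ne_of_gt hp)]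
        rw [inv_eq_one_div, div_le_div_iff₀ (by positivity) (by positivity)]
        nlinarith
      · rw [Finset.sum_Icc_succ_top (by omega)]
        have hih := ih h
        have hp : (1:ℝ) ≤ (p:ℝ) := by exact_mod_cast Nat.one_le_iff_ne_zero.mpr (by omega)
        have hp1 : ((p+1:ℕ):ℝ) = (p:ℝ)+1 := by push_cast; ring
        rw [hp1]
        have step : (((p:ℝ)+1)^2)⁻¹ ≤ 1 / p - 1 / ((p:ℝ)+1) := by
          rw [div_sub_div _ _ (by nlinarith) (by nlinarith)]
          rw [inv_eq_one_div, div_le_div_iff₀ (by positivity) (by nlinarith)]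
          nlinarith
        linarith
  rcases Nat.lt_or_ge n D with h | h
  · rw [Finset.Icc_eq_empty (by omega)]
    simp; positivity
  · have := key n h
    have hn : (0:ℝ) < n := by have : (1:ℕ) ≤ n := le_trans hD h; exact_mod_cast this
    have : 1 / (n:ℝ) > 0 := by positivity
    linarith [key n h]

lemma image_sum_le (h : ℕ → ℝ) (hh : ∀ x, 0 ≤ h x) (A : Finset ℕ) (φ : ℕ → ℕ)
    (hinj : ∀ j ∈ A, ∀ j' ∈ A, φ j = φ j' → j = j') (n : ℕ) (hφ : ∀ j ∈ A, φ j ≤ n) :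
    ∑ j ∈ A, h (φ j) ≤ ∑ x ∈ Finset.range (n+1), h x := by
  rw [← Finset.sum_image hinj]
  apply Finset.sum_le_sum_of_subset_of_nonneg
  · intro x hx
    simp only [Finset.mem_image] at hx
    obtain ⟨j, hj, rfl⟩ := hx
    exact Finset.mem_range.mpr (Nat.lt_succ_of_le (hφ j hj))
  · intro i _ _
    exact hh i

set_option maxHeartbeats 1000000 in
lemma pair_bound (n : ℕ) (hn : 3 ≤ n) (S : ℝ) (hS : 1 ≤ S) (k l : Fin n) (hkl : k ≠ l)
    (hc : 1 < S * ‖circlePt n k - circlePt n l‖) :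
    (‖circlePt n k - circlePt n l‖ ^ 2)⁻¹ ≤
      hfun n S ((k.val : ℤ) - l.val).natAbs +
      hfun n S (n - ((k.val : ℤ) - l.val).natAbs) := by
  unfold hfun
  set D := ⌈(n:ℝ)/(2*Real.pi*S)⌉₊ with hD
  set u := ((k.val : ℤ) - l.val).natAbs with hu
  clear_value D u
  have hkl' : k.val ≠ l.val := fun h => hkl (Fin.ext h)
  have hk := k.isLt
  have hl := l.isLt
  have hu1 : 1 ≤ u := by omega
  have hun : u ≤ n - 1 := by omega
  have hnR : (0:ℝ) < n := by exact_mod_cast Nat.lt_of_lt_of_le (by norm_num) hn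
  have hSpos : (0:ℝ) < S := lt_of_lt_of_le one_pos hS
  -- chord = 2 sin(π u / n)
  have huR : |((k.val : ℝ) - l.val)| = (u : ℝ) := by
    rw [hu, Nat.cast_natAbs]
    congr 1
    push_cast
    ring
  have habs : |Real.sin (Real.pi * ((k.val : ℝ) - l.val) / n)| = Real.sin (Real.pi * u / n) := by
    have h1 : |Real.sin (Real.pi * ((k.val : ℝ) - l.val) / n)|
        = |Real.sin (Real.pi * |((k.val : ℝ) - l.val)| / n)| := by
      rcases abs_cases ((k.val : ℝ) - l.val) with ⟨h, _⟩ | ⟨h, _⟩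
      · rw [h]
      · rw [h]
        rw [show Real.pi * -((k.val:ℝ) - l.val) / n = -(Real.pi * ((k.val:ℝ) - l.val) / n) by ring]
        rw [Real.sin_neg, abs_neg]
    rw [h1, huR, abs_of_nonneg]
    apply Real.sin_nonneg_of_nonneg_of_le_pi
    · positivity
    · rw [div_le_iff₀ hnR]
      have : (u:ℝ) ≤ n := by exact_mod_cast (by omega : u ≤ n)
      nlinarith [Real.pi_pos]
  have hchord : ‖circlePt n k - circlePt n l‖ = 2 * Real.sin (Real.pi * u / n) := by
    rw [chord_eq, habs]
  -- m = min u (n - u)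
  set m := min u (n - u) with hm
  clear_value m
  have hm1 : 1 ≤ m := by omega
  have hm2 : 2 * m ≤ n := by omega
  have hmR : (1:ℝ) ≤ m := by exact_mod_cast hm1
  have hm2R : 2 * (m:ℝ) ≤ n := by exact_mod_cast hm2
  have hsin_eq : Real.sin (Real.pi * u / n) = Real.sin (Real.pi * m / n) := by
    rcases min_cases u (n - u) with ⟨h, _⟩ | ⟨h, _⟩
    · rw [hm, h]
    · rw [hm, h]
      have hcast : ((n - u : ℕ) : ℝ) = (n:ℝ) - u := by
        have : u ≤ n := by omega
        push_cast [this]; ring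
      rw [hcast]
      rw [show Real.pi * ((n:ℝ) - u) / n = Real.pi - Real.pi * u / n by field_simp]
      rw [Real.sin_pi_sub]
  have hθnonneg : 0 ≤ Real.pi * (m:ℝ) / n := by positivity
  have hθle : Real.pi * (m:ℝ) / n ≤ Real.pi / 2 := by
    rw [div_le_div_iff₀ hnR (by norm_num)]
    nlinarith [Real.pi_pos]
  have hlow : 2 * (m:ℝ) / n ≤ Real.sin (Real.pi * m / n) := by
    have := Real.mul_le_sin hθnonneg hθle
    have hπ : Real.pi ≠ 0 := ne_of_gt Real.pi_pos
    calc 2 * (m:ℝ) / n = 2 / Real.pi * (Real.pi * m / n) := by field_simp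
    _ ≤ _ := this
  have hup : Real.sin (Real.pi * m / n) ≤ Real.pi * m / n := Real.sin_le hθnonneg
  -- condition gives D ≤ m
  have hDm : D ≤ m := by
    rw [hD]
    apply Nat.ceil_le.mpr
    have h1 : 1 < S * (2 * Real.sin (Real.pi * m / n)) := by
      rw [← hsin_eq, ← hchord]; exact hc
    have h2 : 1 < S * (2 * (Real.pi * m / n)) := lt_of_lt_of_le h1 (by nlinarith)
    have h2' : S * (2 * (Real.pi * (m:ℝ) / n)) = (S * (2 * (Real.pi * m))) / n := by ring
    rw [h2', lt_div_iff₀ hnR] at h2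
    rw [div_le_iff₀ (by positivity)]
    nlinarith [h2]
  -- term bound
  have hsinpos : 0 < Real.sin (Real.pi * m / n) := lt_of_lt_of_le (by positivity) hlow
  have hterm : (‖circlePt n k - circlePt n l‖ ^ 2)⁻¹ ≤ (n:ℝ)^2/(16*(m:ℝ)^2) := by
    rw [hchord, hsin_eq]
    have hsn : 2*(m:ℝ) ≤ Real.sin (Real.pi*m/n) * n := by
      rw [div_le_iff₀ hnR] at hlow; linarith
    have h4 : (2*(m:ℝ))^2 ≤ (Real.sin (Real.pi*m/n) * n)^2 :=
      pow_le_pow_left₀ (by positivity) hsn 2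
    have hle : 16*(m:ℝ)^2/(n:ℝ)^2 ≤ (2*Real.sin (Real.pi*m/n))^2 := by
      rw [div_le_iff₀ (by positivity)]; nlinarith [h4]
    calc ((2*Real.sin (Real.pi*m/n))^2)⁻¹ ≤ (16*(m:ℝ)^2/(n:ℝ)^2)⁻¹ :=
          inv_anti₀ (by positivity) hle
    _ = (n:ℝ)^2/(16*(m:ℝ)^2) := by rw [inv_div]
  -- conclude
  rcases min_cases u (n - u) with ⟨h, _⟩ | ⟨h, _⟩
  · have e : D ≤ u := by rw [hm, h] at hDm; exact hDm
    have e2 : (n:ℝ)^2/(16*(m:ℝ)^2) = (n:ℝ)^2/(16*(u:ℝ)^2) := by rw [hm, h]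
    rw [if_pos e]
    have h0 : (0:ℝ) ≤ (if D ≤ n - u then (n:ℝ)^2/(16*((n - u : ℕ):ℝ)^2) else 0) := by
      by_cases hc2 : D ≤ n - u
      · rw [if_pos hc2]; positivity
      · rw [if_neg hc2]
    rw [e2] at hterm
    linarith [hterm, h0]
  · have e : D ≤ n - u := by rw [hm, h] at hDm; exact hDm
    have e2 : (n:ℝ)^2/(16*(m:ℝ)^2) = (n:ℝ)^2/(16*((n - u : ℕ):ℝ)^2) := by rw [hm, h]
    rw [if_pos (show D ≤ n - u from e)]
    have h0 : (0:ℝ) ≤ (if D ≤ u then (n:ℝ)^2/(16*((u : ℕ):ℝ)^2) else 0) := by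
      by_cases hc2 : D ≤ u
      · rw [if_pos hc2]; positivity
      · rw [if_neg hc2]
    rw [e2] at hterm
    linarith [hterm, h0]

lemma inner_bound (n : ℕ) (h : ℕ → ℝ) (hh : ∀ x, 0 ≤ h x)
    (image_sum_le : ∀ (A : Finset ℕ) (φ : ℕ → ℕ),
      (∀ j ∈ A, ∀ j' ∈ A, φ j = φ j' → j = j') → (∀ j ∈ A, φ j ≤ n) →
      ∑ j ∈ A, h (φ j) ≤ ∑ x ∈ Finset.range (n+1), h x)
    (kv : ℕ) (hk : kv < n) :
    ∑ j ∈ Finset.range n, (h ((kv:ℤ) - j).natAbs + h (n - ((kv:ℤ) - j).natAbs)) ≤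
      4 * ∑ x ∈ Finset.range (n+1), h x := by
  rw [← Finset.sum_filter_add_sum_filter_not (Finset.range n) (· ≤ kv)]
  set A := (Finset.range n).filter (· ≤ kv) with hA
  set B := (Finset.range n).filter (fun j => ¬ j ≤ kv) with hB
  have memA : ∀ j ∈ A, j ≤ kv ∧ j < n := by
    intro j hj; rw [hA, Finset.mem_filter, Finset.mem_range] at hj; exact ⟨hj.2, hj.1⟩
  have memB : ∀ j ∈ B, kv < j ∧ j < n := by
    intro j hj; rw [hB, Finset.mem_filter, Finset.mem_range] at hj
    exact ⟨Nat.lt_of_not_le hj.2, hj.1⟩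
  have hA1 : ∑ j ∈ A, (h ((kv:ℤ) - j).natAbs + h (n - ((kv:ℤ) - j).natAbs))
      = ∑ j ∈ A, (h (kv - j) + h (n - (kv - j))) := by
    apply Finset.sum_congr rfl
    intro j hj
    have := memA j hj
    have e : ((kv:ℤ) - j).natAbs = kv - j := by omega
    rw [e]
  have hB1 : ∑ j ∈ B, (h ((kv:ℤ) - j).natAbs + h (n - ((kv:ℤ) - j).natAbs))
      = ∑ j ∈ B, (h (j - kv) + h (n - (j - kv))) := by
    apply Finset.sum_congr rfl
    intro j hj
    have := memB j hj
    have e : ((kv:ℤ) - j).natAbs = j - kv := by omega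
    rw [e]
  rw [hA1, hB1, Finset.sum_add_distrib, Finset.sum_add_distrib]
  have t1 : ∑ j ∈ A, h (kv - j) ≤ ∑ x ∈ Finset.range (n+1), h x := by
    apply image_sum_le A (fun j => kv - j)
    · intro j hj j' hj' he; have := memA j hj; have := memA j' hj'; omega
    · intro j hj; have := memA j hj; omega
  have t2 : ∑ j ∈ A, h (n - (kv - j)) ≤ ∑ x ∈ Finset.range (n+1), h x := by
    apply image_sum_le A (fun j => n - (kv - j))
    · intro j hj j' hj' he; have := memA j hj; have := memA j' hj'; omega
    · intro j hj; have := memA j hj; omega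
  have t3 : ∑ j ∈ B, h (j - kv) ≤ ∑ x ∈ Finset.range (n+1), h x := by
    apply image_sum_le B (fun j => j - kv)
    · intro j hj j' hj' he; have := memB j hj; have := memB j' hj'; omega
    · intro j hj; have := memB j hj; omega
  have t4 : ∑ j ∈ B, h (n - (j - kv)) ≤ ∑ x ∈ Finset.range (n+1), h x := by
    apply image_sum_le B (fun j => n - (j - kv))
    · intro j hj j' hj' he; have := memB j hj; have := memB j' hj'; omega
    · intro j hj; have := memB j hj; omega
  linarith

lemma T_le (n : ℕ) (S : ℝ) (hn : 3 ≤ n) (hS : 1 ≤ S) :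
    ∑ x ∈ Finset.range (n+1), hfun n S x ≤
      (n:ℝ)^2/16 * (2 / (⌈(n:ℝ)/(2*Real.pi*S)⌉₊ : ℝ)) := by
  have hnR : (0:ℝ) < n := by exact_mod_cast Nat.lt_of_lt_of_le (by norm_num) hn
  have hSpos : (0:ℝ) < S := lt_of_lt_of_le one_pos hS
  set D := ⌈(n:ℝ)/(2*Real.pi*S)⌉₊ with hD
  have hD1 : 1 ≤ D := by
    rw [hD]
    exact Nat.one_le_iff_ne_zero.mpr (Nat.pos_iff_ne_zero.mp (Nat.ceil_pos.mpr (by positivity)))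
  have e1 : ∑ x ∈ Finset.range (n+1), hfun n S x
      = ∑ x ∈ (Finset.range (n+1)).filter (fun x => D ≤ x), (n:ℝ)^2/(16*(x:ℝ)^2) := by
    rw [Finset.sum_filter]
    apply Finset.sum_congr rfl
    intro x _
    rw [hfun, hD]
  rw [e1]
  have e2 : ∑ x ∈ (Finset.range (n+1)).filter (fun x => D ≤ x), (n:ℝ)^2/(16*(x:ℝ)^2)
      ≤ ∑ x ∈ Finset.Icc D n, (n:ℝ)^2/(16*(x:ℝ)^2) := by
    apply Finset.sum_le_sum_of_subset_of_nonneg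
    · intro x hx
      rw [Finset.mem_filter, Finset.mem_range] at hx
      rw [Finset.mem_Icc]
      omega
    · intro x _ _
      positivity
  refine le_trans e2 ?_
  have e3 : ∑ x ∈ Finset.Icc D n, (n:ℝ)^2/(16*(x:ℝ)^2)
      = (n:ℝ)^2/16 * ∑ x ∈ Finset.Icc D n, ((x:ℝ)^2)⁻¹ := by
    rw [Finset.mul_sum]
    apply Finset.sum_congr rfl
    intro x hx
    have hx1 : 1 ≤ x := le_trans hD1 (Finset.mem_Icc.mp hx).1
    have hxR : (0:ℝ) < x := by exact_mod_cast hx1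
    field_simp
  rw [e3]
  apply mul_le_mul_of_nonneg_left (sumInvSq D hD1 n) (by positivity)

set_option maxHeartbeats 1000000 in
/-- There exist a constant `C > 0` and `N` such that for all `n ≥ N` and all
`S ≥ 1`, `Σ ‖x_k − x_ℓ‖⁻² ≤ C·n²·S`, the sum over all ordered pairs of distinct indices
with `S·‖x_k − x_ℓ‖ > 1`. -/
theorem stmt11 :
    ∃ C : ℝ, 0 < C ∧ ∃ N : ℕ, ∀ n : ℕ, N ≤ n → ∀ S : ℝ, 1 ≤ S →
      (∑ p ∈ Finset.univ.filter (fun p : Fin n × Fin n =>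
          p.1 ≠ p.2 ∧ 1 < S * ‖circlePt n p.1 - circlePt n p.2‖),
        (‖circlePt n p.1 - circlePt n p.2‖ ^ 2)⁻¹) ≤ C * (n : ℝ) ^ 2 * S := by
  refine ⟨4, by norm_num, 3, ?_⟩
  intro n hn S hS
  have hnR : (0:ℝ) < n := by exact_mod_cast Nat.lt_of_lt_of_le (by norm_num) hn
  have hSpos : (0:ℝ) < S := lt_of_lt_of_le one_pos hS
  set D := ⌈(n:ℝ)/(2*Real.pi*S)⌉₊ with hD
  have hD1 : 1 ≤ D := by
    rw [hD]
    exact Nat.one_le_iff_ne_zero.mpr (Nat.pos_iff_ne_zero.mp (Nat.ceil_pos.mpr (by positivity)))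
  have hDR : (1:ℝ) ≤ (D:ℝ) := by exact_mod_cast hD1
  have hDle : (n:ℝ) ≤ 2*Real.pi*S*D := by
    have h1 := Nat.le_ceil ((n:ℝ)/(2*Real.pi*S))
    rw [← hD, div_le_iff₀ (by positivity)] at h1
    nlinarith [h1]
  set T := ∑ x ∈ Finset.range (n+1), hfun n S x with hT
  calc (∑ p ∈ Finset.univ.filter (fun p : Fin n × Fin n =>
          p.1 ≠ p.2 ∧ 1 < S * ‖circlePt n p.1 - circlePt n p.2‖),
        (‖circlePt n p.1 - circlePt n p.2‖ ^ 2)⁻¹)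
      ≤ ∑ p ∈ Finset.univ.filter (fun p : Fin n × Fin n =>
          p.1 ≠ p.2 ∧ 1 < S * ‖circlePt n p.1 - circlePt n p.2‖),
        (hfun n S ((p.1.val : ℤ) - p.2.val).natAbs +
          hfun n S (n - ((p.1.val : ℤ) - p.2.val).natAbs)) := by
        apply Finset.sum_le_sum
        intro p hp
        rw [Finset.mem_filter] at hp
        exact pair_bound n hn S hS p.1 p.2 hp.2.1 hp.2.2
    _ ≤ ∑ p : Fin n × Fin n,
        (hfun n S ((p.1.val : ℤ) - p.2.val).natAbs +
          hfun n S (n - ((p.1.val : ℤ) - p.2.val).natAbs)) := by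
        apply Finset.sum_le_sum_of_subset_of_nonneg (Finset.filter_subset _ _)
        intro p _ _
        have := hfun_nonneg n S ((p.1.val : ℤ) - p.2.val).natAbs
        have := hfun_nonneg n S (n - ((p.1.val : ℤ) - p.2.val).natAbs)
        linarith
    _ = ∑ k : Fin n, ∑ l : Fin n,
        (hfun n S ((k.val : ℤ) - l.val).natAbs +
          hfun n S (n - ((k.val : ℤ) - l.val).natAbs)) := Fintype.sum_prod_type _
    _ ≤ ∑ _k : Fin n, 4 * T := by
        apply Finset.sum_le_sum
        intro k _
        have e : ∑ l : Fin n,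
            (hfun n S ((k.val : ℤ) - l.val).natAbs +
              hfun n S (n - ((k.val : ℤ) - l.val).natAbs))
            = ∑ j ∈ Finset.range n,
            (hfun n S ((k.val : ℤ) - j).natAbs +
              hfun n S (n - ((k.val : ℤ) - j).natAbs)) :=
          Fin.sum_univ_eq_sum_range (fun j =>
            hfun n S ((k.val : ℤ) - j).natAbs +
              hfun n S (n - ((k.val : ℤ) - j).natAbs)) n
        rw [e, hT]
        exact inner_bound n (hfun n S) (hfun_nonneg n S)
          (fun A φ hinj hle => image_sum_le (hfun n S) (hfun_nonneg n S) A φ hinj n hle)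
          k.val k.isLt
    _ = (n:ℝ) * (4 * T) := by
        rw [Finset.sum_const, Finset.card_univ, Fintype.card_fin, nsmul_eq_mul]
    _ ≤ (n:ℝ) * (4 * ((n:ℝ)^2/16 * (2 / (D:ℝ)))) := by
        have h1 := T_le n S hn hS
        rw [← hD, ← hT] at h1
        have h2 : 4 * T ≤ 4 * ((n:ℝ)^2/16 * (2 / (D:ℝ))) := by linarith
        exact mul_le_mul_of_nonneg_left h2 (le_of_lt hnR)
    _ ≤ 4 * (n : ℝ) ^ 2 * S := by
        have hDpos : (0:ℝ) < D := lt_of_lt_of_le one_pos hDR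
        rw [show (n:ℝ) * (4 * ((n:ℝ)^2/16 * (2 / (D:ℝ)))) = (n:ℝ)^3 / (2*(D:ℝ)) by
          field_simp; ring]
        rw [div_le_iff₀ (by positivity)]
        have hπ4 : Real.pi ≤ 4 := by linarith [Real.pi_le_four]
        have key : (n:ℝ) ≤ 8*S*D := by
          have hprod : (0:ℝ) ≤ (4 - Real.pi) * S * (D:ℝ) :=
            mul_nonneg (mul_nonneg (by linarith) hSpos.le) (by linarith)
          nlinarith [hprod]
        nlinarith [mul_le_mul_of_nonneg_right key (sq_nonneg (n:ℝ)), sq_nonneg (n:ℝ)]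
end

section
/- Consider the discrete circle P_n partitioned into M blocks of consecutive indices, and for S_0 > 0 let E_1 = Σ_{(k,ℓ): k≠ℓ, x_k∼x_ℓ} 1/(1+S_0²‖x_k−x_ℓ‖²). There exist constants c_1, C_1 > 0 and N such that for all n ≥ N, all M dividing n with M ≥ 3, and all S_0 with M ≤ S_0 ≤ n/10, one has c_1·n²/S_0 ≤ E_1 ≤ C_1·n²/S_0. -/
open Real Finset

/-- `E₁ = Σ_{(k,ℓ): k≠ℓ, x_k ∼ x_ℓ} 1/(1 + S₀²‖x_k − x_ℓ‖²)`,
the sum over ordered same-block pairs of distinct indices. -/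
noncomputable def E1 (n M : ℕ) (S₀ : ℝ) : ℝ :=
  ∑ p ∈ Finset.univ.filter
      (fun p : Fin n × Fin n => p.1 ≠ p.2 ∧ sameBlock n M p.1 p.2),
    (1 + S₀ ^ 2 * ‖circlePt n p.1 - circlePt n p.2‖ ^ 2)⁻¹

/- ### Auxiliary lemmas -/

lemma normsq (n : ℕ) (i j : Fin n) :
    ‖circlePt n i - circlePt n j‖ ^ 2
      = 4 * Real.sin (Real.pi * ((i.val : ℝ) - j.val) / n) ^ 2 := by
  have h : ‖circlePt n i - circlePt n j‖ ^ 2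
      = ∑ k : Fin 2, (circlePt n i k - circlePt n j k) ^ 2 := by
    rw [← dist_eq_norm, EuclideanSpace.dist_eq, Real.sq_sqrt (by positivity)]
    simp [Real.dist_eq, sq_abs]
  rw [h, Fin.sum_univ_two]
  simp only [circlePt, WithLp.ofLp_toLp, eq_self_iff_true, if_true, if_neg (by decide : ¬ (1 : Fin 2) = 0)]
  have e : Real.pi * ((i.val : ℝ) - j.val) / n
      = (2 * Real.pi * i.val / n - 2 * Real.pi * j.val / n) / 2 := by ring
  rw [e, Real.sin_sq_eq_half_sub,
    show 2 * ((2 * Real.pi * (i.val:ℝ) / n - 2 * Real.pi * j.val / n) / 2)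
      = 2 * Real.pi * (i.val:ℝ) / n - 2 * Real.pi * j.val / n from by ring,
    Real.cos_sub]
  have h1 := Real.sin_sq_add_cos_sq (2 * Real.pi * (i.val:ℝ) / n)
  have h2 := Real.sin_sq_add_cos_sq (2 * Real.pi * (j.val:ℝ) / n)
  nlinarith [h1, h2]

lemma block_dist (L : ℕ) (hL : 0 < L) (i j : ℕ) (hb : i / L = j / L) (hij : i ≤ j) :
    j - i < L := by
  have h1 := Nat.div_add_mod i L
  have h2 := Nat.div_add_mod j L
  have h3 : i % L < L := Nat.mod_lt _ hL
  have h4 : j % L < L := Nat.mod_lt _ hL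
  have hb' : L * (i / L) = L * (j / L) := by rw [hb]
  omega

lemma sin_lb (n : ℕ) (hn : 0 < n) (d : ℕ) (hdn : 2 * (d:ℝ) ≤ n) :
    2 * (d:ℝ) / n ≤ Real.sin (Real.pi * d / n) := by
  have hn' : (0:ℝ) < n := by exact_mod_cast hn
  have hx1 : (0:ℝ) ≤ Real.pi * d / n := by positivity
  have hx2 : Real.pi * d / n ≤ Real.pi / 2 := by
    rw [div_le_div_iff₀ hn' two_pos]
    nlinarith [Real.pi_pos]
  have h := Real.mul_le_sin hx1 hx2
  calc 2 * (d:ℝ) / n = 2 / Real.pi * (Real.pi * d / n) := by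
        field_simp
    _ ≤ Real.sin (Real.pi * d / n) := h

lemma sin_ub (n : ℕ) (hn : 0 < n) (d : ℕ) :
    Real.sin (Real.pi * d / n) ^ 2 ≤ (Real.pi * d / n) ^ 2 := by
  have hn' : (0:ℝ) < n := by exact_mod_cast hn
  have hx1 : (0:ℝ) ≤ Real.pi * d / n := by positivity
  have h := Real.sin_le hx1
  rcases le_or_gt (Real.pi * d / n) Real.pi with hle | hlt
  · have hs := Real.sin_nonneg_of_nonneg_of_le_pi hx1 hle
    nlinarith
  · nlinarith [Real.neg_one_le_sin (Real.pi * d / n), Real.sin_le_one (Real.pi * d / n),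
      Real.pi_gt_three]

lemma telescope (a : ℝ) (ha : 0 < a) (K : ℕ) :
    ∑ d ∈ Finset.Icc 1 K, (1 + a ^ 2 * (d:ℝ) ^ 2)⁻¹ ≤ 2 * a⁻¹ := by
  set G : ℕ → ℝ := fun d => a⁻¹ * (1 + a * d)⁻¹ with hG
  have hpos : ∀ d : ℕ, (0:ℝ) < 1 + a * d := by
    intro d; positivity
  have key : ∀ d : ℕ, (1 + a ^ 2 * ((d:ℝ) + 1) ^ 2)⁻¹ ≤ 2 * (G d - G (d + 1)) := by
    intro d
    have h1 : G d - G (d + 1) = ((1 + a * d) * (1 + a * (d + 1)))⁻¹ := by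
      have hd := hpos d
      have hd1 := hpos (d + 1)
      rw [hG]
      push_cast
      field_simp
      ring
    rw [h1]
    rw [inv_eq_one_div, inv_eq_one_div, mul_div_assoc']
    rw [div_le_div_iff₀ (by positivity) (by positivity)]
    have : (0:ℝ) ≤ a * d := by positivity
    nlinarith [sq_nonneg (1 - a * ((d:ℝ)+1)), sq_nonneg (a * (d:ℝ))]
  calc ∑ d ∈ Finset.Icc 1 K, (1 + a ^ 2 * (d:ℝ) ^ 2)⁻¹
      = ∑ i ∈ Finset.range (K + 1 - 1), (1 + a ^ 2 * ((1 + i : ℕ):ℝ) ^ 2)⁻¹ := by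
        rw [← Finset.Ico_add_one_right_eq_Icc, Finset.sum_Ico_eq_sum_range]
    _ = ∑ i ∈ Finset.range K, (1 + a ^ 2 * ((i:ℝ) + 1) ^ 2)⁻¹ := by
        apply Finset.sum_congr (by norm_num)
        intro i _; push_cast; ring_nf
    _ ≤ ∑ i ∈ Finset.range K, 2 * (G i - G (i + 1)) := by
        exact Finset.sum_le_sum fun i _ => key i
    _ = 2 * (G 0 - G K) := by rw [← Finset.mul_sum, Finset.sum_range_sub' G K]
    _ ≤ 2 * a⁻¹ := by
        have h0 : G 0 = a⁻¹ := by simp [hG]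
        have hK : 0 ≤ G K := by rw [hG]; positivity
        rw [h0]; linarith

lemma term_ub (n : ℕ) (hn : 0 < n) (S₀ : ℝ) (hS : 0 < S₀) (k ℓ : Fin n) (d : ℕ)
    (hd : (k.val:ℝ) - ℓ.val = d ∨ (ℓ.val:ℝ) - k.val = d) (hdn : 2 * (d:ℝ) ≤ n) :
    (1 + S₀ ^ 2 * ‖circlePt n k - circlePt n ℓ‖ ^ 2)⁻¹
      ≤ (1 + (4 * S₀ / n) ^ 2 * (d:ℝ) ^ 2)⁻¹ := by
  rw [normsq]
  have hnr : (0:ℝ) < n := by exact_mod_cast hn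
  have hsq : Real.sin (Real.pi * ((k.val:ℝ) - ℓ.val) / n) ^ 2
      = Real.sin (Real.pi * d / n) ^ 2 := by
    rcases hd with h | h
    · rw [show Real.pi * ((k.val:ℝ) - ℓ.val) / n = Real.pi * d / n by rw [h]]
    · rw [show Real.pi * ((k.val:ℝ) - ℓ.val) / n = -(Real.pi * d / n) by rw [← h]; ring,
        Real.sin_neg, neg_sq]
  rw [hsq]
  have hlow := sin_lb n hn d hdn
  have h2 : (2 * (d:ℝ) / n) ^ 2 ≤ Real.sin (Real.pi * d / n) ^ 2 :=
    pow_le_pow_left₀ (by positivity) hlow 2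
  have h3 : 4 * S₀ ^ 2 * (2 * (d:ℝ) / n) ^ 2
      ≤ 4 * S₀ ^ 2 * Real.sin (Real.pi * d / n) ^ 2 :=
    mul_le_mul_of_nonneg_left h2 (by positivity)
  have h4 : (4 * S₀ / n) ^ 2 * (d:ℝ) ^ 2 = 4 * S₀ ^ 2 * (2 * (d:ℝ) / n) ^ 2 := by
    field_simp; ring
  apply inv_anti₀ (by positivity)
  nlinarith [h3, h4]

lemma term_lb (n : ℕ) (hn : 0 < n) (S₀ : ℝ) (hS : 0 < S₀) (k ℓ : Fin n) (d : ℕ)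
    (hd : (k.val:ℝ) - ℓ.val = d ∨ (ℓ.val:ℝ) - k.val = d)
    (hdn : 2 * Real.pi * S₀ * d ≤ n) :
    (1/2 : ℝ) ≤ (1 + S₀ ^ 2 * ‖circlePt n k - circlePt n ℓ‖ ^ 2)⁻¹ := by
  rw [normsq]
  have hnr : (0:ℝ) < n := by exact_mod_cast hn
  have hsq : Real.sin (Real.pi * ((k.val:ℝ) - ℓ.val) / n) ^ 2
      = Real.sin (Real.pi * d / n) ^ 2 := by
    rcases hd with h | h
    · rw [show Real.pi * ((k.val:ℝ) - ℓ.val) / n = Real.pi * d / n by rw [h]]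
    · rw [show Real.pi * ((k.val:ℝ) - ℓ.val) / n = -(Real.pi * d / n) by rw [← h]; ring,
        Real.sin_neg, neg_sq]
  rw [hsq]
  have hub := sin_ub n hn d
  have h0 : (0:ℝ) ≤ 2 * Real.pi * S₀ * d := by positivity
  have h2 : (2 * Real.pi * S₀ * (d:ℝ)) ^ 2 ≤ (n:ℝ) ^ 2 := pow_le_pow_left₀ h0 hdn 2
  have h1 : S₀ ^ 2 * (4 * (Real.pi * (d:ℝ) / n) ^ 2) ≤ 1 := by
    have he : S₀ ^ 2 * (4 * (Real.pi * (d:ℝ) / n) ^ 2)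
        = (2 * Real.pi * S₀ * d) ^ 2 / (n:ℝ) ^ 2 := by
      field_simp; ring
    rw [he, div_le_one (by positivity)]
    exact h2
  have hX1 : S₀ ^ 2 * (4 * Real.sin (Real.pi * (d:ℝ) / n) ^ 2) ≤ 1 := by
    nlinarith [hub, sq_nonneg S₀]
  have hX0 : (0:ℝ) ≤ S₀ ^ 2 * (4 * Real.sin (Real.pi * (d:ℝ) / n) ^ 2) := by positivity
  have hle2 : 1 + S₀ ^ 2 * (4 * Real.sin (Real.pi * (d:ℝ) / n) ^ 2) ≤ 2 := by linarith
  calc (1/2 : ℝ) = 2⁻¹ := by norm_num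
    _ ≤ (1 + S₀ ^ 2 * (4 * Real.sin (Real.pi * (d:ℝ) / n) ^ 2))⁻¹ :=
        inv_anti₀ (by positivity) hle2
set_option maxHeartbeats 1000000 in
lemma E1_lower (n M : ℕ) (hM : 3 ≤ M) (hMn : M ∣ n)
    (S₀ : ℝ) (hMS : (M : ℝ) ≤ S₀) (hSn : S₀ ≤ (n : ℝ) / 10) :
    3 / 98 * ((n : ℝ) ^ 2 / S₀) ≤ E1 n M S₀ := by
  have hM0 : 0 < M := by omega
  have h3S : (3:ℝ) ≤ S₀ := le_trans (by exact_mod_cast hM) hMS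
  have hS0 : (0:ℝ) < S₀ := by linarith
  have hnr : (0:ℝ) < n := by linarith
  have hn0 : 0 < n := by exact_mod_cast hnr
  set L := n / M with hLdef
  have hLM : L * M = n := Nat.div_mul_cancel hMn
  have hL0 : 0 < L := Nat.div_pos (Nat.le_of_dvd hn0 hMn) hM0
  have hLr : (0:ℝ) < L := by exact_mod_cast hL0
  have hMr : (0:ℝ) < M := by exact_mod_cast hM0
  have hMLr : (L:ℝ) * M = n := by exact_mod_cast hLM
  have hL3 : L * 3 ≤ n := by
    calc L * 3 ≤ L * M := Nat.mul_le_mul_left L hM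
      _ = n := hLM
  set S : Finset (Fin n × Fin n) := Finset.univ.filter
      (fun p : Fin n × Fin n => p.1 ≠ p.2 ∧ sameBlock n M p.1 p.2) with hSdef
  have hE1 : E1 n M S₀
      = ∑ p ∈ S, (1 + S₀ ^ 2 * ‖circlePt n p.1 - circlePt n p.2‖ ^ 2)⁻¹ := rfl
  -- block distance for members of S
  have hdist : ∀ p : Fin n × Fin n, p ∈ S → p.1.val ≤ p.2.val → p.2.val - p.1.val < L := by
    intro p hp hle
    have hp' := (Finset.mem_filter.mp hp).2
    have hb : p.1.val / L = p.2.val / L := by rw [hLdef]; exact hp'.2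
    exact block_dist L hL0 _ _ hb hle
  have hdist' : ∀ p : Fin n × Fin n, p ∈ S → p.2.val ≤ p.1.val → p.1.val - p.2.val < L := by
    intro p hp hle
    have hp' := (Finset.mem_filter.mp hp).2
    have hb : p.2.val / L = p.1.val / L := by rw [hLdef]; exact hp'.2.symm
    exact block_dist L hL0 _ _ hb hle
  set D : ℕ := ⌊(n:ℝ) / (7 * S₀)⌋₊ with hDdef
  have hD1 : 1 ≤ D := by
    apply Nat.le_floor
    rw [Nat.cast_one, le_div_iff₀ (by positivity)]
    linarith
  have hDle : (D:ℝ) ≤ (n:ℝ) / (7 * S₀) := Nat.floor_le (by positivity)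
  have hDhalf : (n:ℝ) / (14 * S₀) ≤ D := by
    rcases le_or_gt ((n:ℝ) / (7 * S₀)) 2 with h | h
    · have h14 : (n:ℝ) / (14 * S₀) ≤ 1 := by
        rw [div_le_one (by positivity)]
        rw [div_le_iff₀ (by positivity)] at h
        linarith
      have : (1:ℝ) ≤ D := by exact_mod_cast hD1
      linarith
    · have hfl := Nat.lt_floor_add_one ((n:ℝ) / (7 * S₀))
      have : (n:ℝ) / (14 * S₀) = ((n:ℝ) / (7 * S₀)) / 2 := by ring
      rw [this]
      rw [← hDdef] at hfl
      linarith
  have hD7 : 7 * (D:ℝ) ≤ L := by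
    have h1 : (n:ℝ) / (7 * S₀) ≤ (n:ℝ) / (7 * M) := by
      gcongr
    have h2 : (n:ℝ) / (7 * M) = (L:ℝ) / 7 := by
      rw [← hMLr]; field_simp
    have := hDle.trans (h1.trans_eq h2)
    linarith
  have hDL : D ≤ L := by
    have : (D:ℝ) ≤ L := by linarith
    exact_mod_cast this
  have hcastLD : ((L - D : ℕ) : ℝ) = (L:ℝ) - D := by
    rw [Nat.cast_sub hDL]
  have h7SD : 7 * S₀ * (D:ℝ) ≤ n := by
    rw [le_div_iff₀ (by positivity)] at hDle
    linarith
  have huL : ∀ u : Fin (L - D), u.val < L := fun u => by have := u.isLt; omega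
  -- the injection
  have hmem1 : ∀ x : Fin M × Fin (L - D) × Fin D, L * x.1.val + x.2.1.val < n := by
    intro ⟨b, u, d⟩
    calc L * b.val + u.val < L * b.val + L := by have := huL u; omega
      _ = L * (b.val + 1) := by ring
      _ ≤ L * M := Nat.mul_le_mul_left L b.isLt
      _ = n := hLM
  have hmem2 : ∀ x : Fin M × Fin (L - D) × Fin D,
      L * x.1.val + x.2.1.val + x.2.2.val + 1 < n := by
    intro ⟨b, u, d⟩
    have hu := u.isLt
    have hd := d.isLt
    calc L * b.val + u.val + d.val + 1 = L * b.val + (u.val + d.val + 1) := by ring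
      _ < L * b.val + L := by omega
      _ = L * (b.val + 1) := by ring
      _ ≤ L * M := Nat.mul_le_mul_left L b.isLt
      _ = n := hLM
  set φ : Fin M × Fin (L - D) × Fin D → Fin n × Fin n :=
    fun x => (⟨L * x.1.val + x.2.1.val, hmem1 x⟩,
              ⟨L * x.1.val + x.2.1.val + x.2.2.val + 1, hmem2 x⟩) with hφ
  have hφS : ∀ x, φ x ∈ S := by
    intro ⟨b, u, d⟩
    rw [hSdef, Finset.mem_filter]
    refine ⟨Finset.mem_univ _, ?_, ?_⟩
    · simp only [hφ]
      intro h
      simp only [Prod.mk.injEq, Fin.mk.injEq] at h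
      omega
    · show (L * b.val + u.val) / (n / M) = (L * b.val + u.val + d.val + 1) / (n / M)
      rw [← hLdef]
      have hu := huL u
      have hud : u.val + d.val + 1 < L := by have := u.isLt; have := d.isLt; omega
      rw [Nat.mul_add_div hL0, show L * b.val + u.val + d.val + 1
          = L * b.val + (u.val + d.val + 1) from by ring, Nat.mul_add_div hL0,
        Nat.div_eq_of_lt hu, Nat.div_eq_of_lt hud]
  have hφinj : ∀ x ∈ (Finset.univ : Finset (Fin M × Fin (L - D) × Fin D)), ∀ y ∈ Finset.univ,
      φ x = φ y → x = y := by
    rintro ⟨b1, u1, d1⟩ - ⟨b2, u2, d2⟩ - heq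
    have h1 : L * b1.val + u1.val = L * b2.val + u2.val :=
      congrArg (fun q : Fin n × Fin n => q.1.val) heq
    have h2 : L * b1.val + u1.val + d1.val + 1 = L * b2.val + u2.val + d2.val + 1 :=
      congrArg (fun q : Fin n × Fin n => q.2.val) heq
    have hu1 := huL u1
    have hu2 := huL u2
    have hb : b1.val = b2.val := by
      have e1 : (L * b1.val + u1.val) / L = b1.val := by
        rw [Nat.mul_add_div hL0, Nat.div_eq_of_lt hu1]
        omega
      have e2 : (L * b2.val + u2.val) / L = b2.val := by
        rw [Nat.mul_add_div hL0, Nat.div_eq_of_lt hu2]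
        omega
      rw [← e1, ← e2, h1]
    have hLb : L * b1.val = L * b2.val := by rw [hb]
    have hu : u1.val = u2.val := by omega
    have hd : d1.val = d2.val := by omega
    simp only [Prod.mk.injEq]
    exact ⟨Fin.ext hb, Fin.ext hu, Fin.ext hd⟩
  have hφsub : Finset.univ.image φ ⊆ S := by
    intro q hq
    obtain ⟨x, -, rfl⟩ := Finset.mem_image.mp hq
    exact hφS x
  -- each term of the image is ≥ 1/2
  have hterm : ∀ x : Fin M × Fin (L - D) × Fin D,
      (1/2 : ℝ) ≤ (1 + S₀ ^ 2 * ‖circlePt n (φ x).1 - circlePt n (φ x).2‖ ^ 2)⁻¹ := by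
    intro ⟨b, u, d⟩
    apply term_lb n hn0 S₀ hS0 _ _ (d.val + 1)
    · right
      show ((L * b.val + u.val + d.val + 1 : ℕ):ℝ) - ((L * b.val + u.val : ℕ):ℝ) = _
      push_cast
      ring
    · have hdD : (d.val:ℝ) + 1 ≤ D := by exact_mod_cast d.isLt
      have hπ : Real.pi < 3.15 := Real.pi_lt_d2
      push_cast
      nlinarith [Real.pi_pos, Real.pi_lt_d2, hS0, hDle, h7SD, hdD,
        mul_le_mul_of_nonneg_right (show 2 * Real.pi ≤ 7 by nlinarith [Real.pi_lt_d2])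
          (show (0:ℝ) ≤ S₀ * ((d.val:ℝ) + 1) by positivity)]
  -- assemble
  have hcard : ((Finset.univ : Finset (Fin M × Fin (L - D) × Fin D)).card : ℝ)
      = (M:ℝ) * ((L:ℝ) - D) * D := by
    rw [Finset.card_univ]
    simp only [Fintype.card_prod, Fintype.card_fin]
    push_cast [Nat.cast_sub hDL]
    ring
  calc 3 / 98 * ((n:ℝ) ^ 2 / S₀)
      ≤ (M:ℝ) * ((L:ℝ) - D) * D * (1/2) := by
        have h1 : (6/7:ℝ) * L ≤ (L:ℝ) - D := by linarith
        have h2 : (n:ℝ) / (14 * S₀) ≤ D := hDhalf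
        have h3 : (M:ℝ) * ((6/7:ℝ) * L) * ((n:ℝ) / (14 * S₀)) ≤ (M:ℝ) * ((L:ℝ) - D) * D := by
          apply mul_le_mul _ h2 (by positivity) _
          · exact mul_le_mul_of_nonneg_left h1 (by positivity)
          · have : (0:ℝ) ≤ (L:ℝ) - D := by linarith
            positivity
        have h4 : (M:ℝ) * ((6/7:ℝ) * L) * ((n:ℝ) / (14 * S₀))
            = (3/49) * (((L:ℝ) * M) * (n:ℝ) / S₀) := by
          field_simp; ring
        rw [hMLr] at h4
        have h5 : (3/49:ℝ) * ((n:ℝ) * (n:ℝ) / S₀) = 2 * (3 / 98 * ((n:ℝ) ^ 2 / S₀)) := by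
          ring
        linarith [h3, h4.symm.le]
    _ = ((Finset.univ : Finset (Fin M × Fin (L - D) × Fin D)).card : ℝ) * (1/2) := by
        rw [hcard]
    _ = (Finset.univ : Finset (Fin M × Fin (L - D) × Fin D)).card • (1/2 : ℝ) := by
        rw [nsmul_eq_mul]
    _ ≤ ∑ x ∈ (Finset.univ : Finset (Fin M × Fin (L - D) × Fin D)),
          (1 + S₀ ^ 2 * ‖circlePt n (φ x).1 - circlePt n (φ x).2‖ ^ 2)⁻¹ :=
        Finset.card_nsmul_le_sum _ _ _ (fun x _ => hterm x)
    _ = ∑ q ∈ Finset.univ.image φ,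
          (1 + S₀ ^ 2 * ‖circlePt n q.1 - circlePt n q.2‖ ^ 2)⁻¹ :=
        (Finset.sum_image (f := fun q : Fin n × Fin n =>
          (1 + S₀ ^ 2 * ‖circlePt n q.1 - circlePt n q.2‖ ^ 2)⁻¹) hφinj).symm
    _ ≤ ∑ p ∈ S, (1 + S₀ ^ 2 * ‖circlePt n p.1 - circlePt n p.2‖ ^ 2)⁻¹ :=
        Finset.sum_le_sum_of_subset_of_nonneg hφsub (fun p _ _ => by positivity)
    _ = E1 n M S₀ := hE1.symm
set_option maxHeartbeats 1000000 in
lemma E1_upper (n M : ℕ) (hM : 3 ≤ M) (hMn : M ∣ n)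
    (S₀ : ℝ) (hMS : (M : ℝ) ≤ S₀) (hSn : S₀ ≤ (n : ℝ) / 10) :
    E1 n M S₀ ≤ 1 * ((n : ℝ) ^ 2 / S₀) := by
  have hM0 : 0 < M := by omega
  have h3S : (3:ℝ) ≤ S₀ := le_trans (by exact_mod_cast hM) hMS
  have hS0 : (0:ℝ) < S₀ := by linarith
  have hnr : (0:ℝ) < n := by linarith
  have hn0 : 0 < n := by exact_mod_cast hnr
  set L := n / M with hLdef
  have hLM : L * M = n := Nat.div_mul_cancel hMn
  have hL0 : 0 < L := Nat.div_pos (Nat.le_of_dvd hn0 hMn) hM0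
  have hL3 : L * 3 ≤ n := by
    calc L * 3 ≤ L * M := Nat.mul_le_mul_left L hM
      _ = n := hLM
  set S : Finset (Fin n × Fin n) := Finset.univ.filter
      (fun p : Fin n × Fin n => p.1 ≠ p.2 ∧ sameBlock n M p.1 p.2) with hSdef
  have hE1 : E1 n M S₀
      = ∑ p ∈ S, (1 + S₀ ^ 2 * ‖circlePt n p.1 - circlePt n p.2‖ ^ 2)⁻¹ := rfl
  have hdist : ∀ p : Fin n × Fin n, p ∈ S → p.1.val ≤ p.2.val → p.2.val - p.1.val < L := by
    intro p hp hle
    have hp' := (Finset.mem_filter.mp hp).2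
    have hb : p.1.val / L = p.2.val / L := by rw [hLdef]; exact hp'.2
    exact block_dist L hL0 _ _ hb hle
  have hdist' : ∀ p : Fin n × Fin n, p ∈ S → p.2.val ≤ p.1.val → p.1.val - p.2.val < L := by
    intro p hp hle
    have hp' := (Finset.mem_filter.mp hp).2
    have hb : p.2.val / L = p.1.val / L := by rw [hLdef]; exact hp'.2.symm
    exact block_dist L hL0 _ _ hb hle
  have htel := telescope (4 * S₀ / (n:ℝ)) (by positivity) (L - 1)
  -- first half : pairs with p.1 < p.2
  have hhalf1 : ∑ p ∈ S.filter (fun p => p.1.val < p.2.val),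
      (1 + S₀ ^ 2 * ‖circlePt n p.1 - circlePt n p.2‖ ^ 2)⁻¹
      ≤ (n:ℝ) * (2 * (4 * S₀ / (n:ℝ))⁻¹) := by
    set ψ : Fin n × Fin n → Fin n × ℕ := fun p => (p.1, p.2.val - p.1.val) with hψ
    have hinj : ∀ x ∈ S.filter (fun p => p.1.val < p.2.val),
        ∀ y ∈ S.filter (fun p => p.1.val < p.2.val), ψ x = ψ y → x = y := by
      intro x hx y hy h
      have hx' : x.1.val < x.2.val := (Finset.mem_filter.mp hx).2
      have hy' : y.1.val < y.2.val := (Finset.mem_filter.mp hy).2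
      simp only [hψ, Prod.mk.injEq] at h
      obtain ⟨h1, h2⟩ := h
      have hv : x.1.val = y.1.val := congrArg Fin.val h1
      have hv2 : x.2.val = y.2.val := by omega
      exact Prod.ext_iff.mpr ⟨h1, Fin.ext hv2⟩
    calc ∑ p ∈ S.filter (fun p => p.1.val < p.2.val),
          (1 + S₀ ^ 2 * ‖circlePt n p.1 - circlePt n p.2‖ ^ 2)⁻¹
        ≤ ∑ p ∈ S.filter (fun p => p.1.val < p.2.val),
          (1 + (4 * S₀ / (n:ℝ)) ^ 2 * (((p.2.val - p.1.val : ℕ)):ℝ) ^ 2)⁻¹ := by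
          apply Finset.sum_le_sum
          intro p hp
          have hmem := Finset.mem_filter.mp hp
          have hlt : p.1.val < p.2.val := hmem.2
          have hd : ((p.2.val:ℝ)) - p.1.val = (((p.2.val - p.1.val : ℕ)):ℝ) := by
            rw [Nat.cast_sub hlt.le]
          have hdL : p.2.val - p.1.val < L := hdist p hmem.1 hlt.le
          have h2d : 2 * (((p.2.val - p.1.val : ℕ)):ℝ) ≤ n := by
            have h2d' : 2 * (p.2.val - p.1.val) ≤ n := by omega
            exact_mod_cast h2d'
          exact term_ub n hn0 S₀ hS0 p.1 p.2 _ (Or.inr hd) h2d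
      _ = ∑ q ∈ (S.filter (fun p => p.1.val < p.2.val)).image ψ,
            (1 + (4 * S₀ / (n:ℝ)) ^ 2 * ((q.2:ℕ):ℝ) ^ 2)⁻¹ :=
          (Finset.sum_image (f := fun q : Fin n × ℕ =>
            (1 + (4 * S₀ / (n:ℝ)) ^ 2 * ((q.2:ℕ):ℝ) ^ 2)⁻¹) hinj).symm
      _ ≤ ∑ q ∈ Finset.univ ×ˢ Finset.Icc 1 (L - 1),
            (1 + (4 * S₀ / (n:ℝ)) ^ 2 * ((q.2:ℕ):ℝ) ^ 2)⁻¹ := by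
          apply Finset.sum_le_sum_of_subset_of_nonneg
          · intro q hq
            obtain ⟨p, hp, rfl⟩ := Finset.mem_image.mp hq
            have hmem := Finset.mem_filter.mp hp
            have hlt : p.1.val < p.2.val := hmem.2
            have hdL : p.2.val - p.1.val < L := hdist p hmem.1 hlt.le
            exact Finset.mem_product.mpr ⟨Finset.mem_univ _,
              Finset.mem_Icc.mpr ⟨Nat.sub_pos_of_lt hlt, Nat.le_pred_of_lt hdL⟩⟩
          · intro q _ _; positivity
      _ = (n:ℝ) * ∑ d ∈ Finset.Icc 1 (L - 1),
            (1 + (4 * S₀ / (n:ℝ)) ^ 2 * (d:ℝ) ^ 2)⁻¹ := by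
          rw [Finset.sum_product]
          simp only
          rw [Finset.sum_const, Finset.card_univ, Fintype.card_fin, nsmul_eq_mul]
      _ ≤ (n:ℝ) * (2 * (4 * S₀ / (n:ℝ))⁻¹) :=
          mul_le_mul_of_nonneg_left htel (le_of_lt hnr)
  -- second half : pairs with ¬ p.1 < p.2
  have hhalf2 : ∑ p ∈ S.filter (fun p => ¬ p.1.val < p.2.val),
      (1 + S₀ ^ 2 * ‖circlePt n p.1 - circlePt n p.2‖ ^ 2)⁻¹
      ≤ (n:ℝ) * (2 * (4 * S₀ / (n:ℝ))⁻¹) := by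
    have hlt2 : ∀ p : Fin n × Fin n, p ∈ S.filter (fun p => ¬ p.1.val < p.2.val) →
        p.2.val < p.1.val := by
      intro p hp
      have hmem := Finset.mem_filter.mp hp
      have hne : p.1 ≠ p.2 := (Finset.mem_filter.mp hmem.1).2.1
      have hvne : p.1.val ≠ p.2.val := fun h => hne (Fin.ext h)
      have := hmem.2
      omega
    set ψ : Fin n × Fin n → Fin n × ℕ := fun p => (p.1, p.1.val - p.2.val) with hψ
    have hinj : ∀ x ∈ S.filter (fun p => ¬ p.1.val < p.2.val),
        ∀ y ∈ S.filter (fun p => ¬ p.1.val < p.2.val), ψ x = ψ y → x = y := by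
      intro x hx y hy h
      have hx' := hlt2 x hx
      have hy' := hlt2 y hy
      simp only [hψ, Prod.mk.injEq] at h
      obtain ⟨h1, h2⟩ := h
      have hv : x.1.val = y.1.val := congrArg Fin.val h1
      have hv2 : x.2.val = y.2.val := by omega
      exact Prod.ext_iff.mpr ⟨h1, Fin.ext hv2⟩
    calc ∑ p ∈ S.filter (fun p => ¬ p.1.val < p.2.val),
          (1 + S₀ ^ 2 * ‖circlePt n p.1 - circlePt n p.2‖ ^ 2)⁻¹
        ≤ ∑ p ∈ S.filter (fun p => ¬ p.1.val < p.2.val),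
          (1 + (4 * S₀ / (n:ℝ)) ^ 2 * (((p.1.val - p.2.val : ℕ)):ℝ) ^ 2)⁻¹ := by
          apply Finset.sum_le_sum
          intro p hp
          have hmem := Finset.mem_filter.mp hp
          have hlt : p.2.val < p.1.val := hlt2 p hp
          have hd : ((p.1.val:ℝ)) - p.2.val = (((p.1.val - p.2.val : ℕ)):ℝ) := by
            rw [Nat.cast_sub hlt.le]
          have hdL : p.1.val - p.2.val < L := hdist' p hmem.1 hlt.le
          have h2d : 2 * (((p.1.val - p.2.val : ℕ)):ℝ) ≤ n := by
            have h2d' : 2 * (p.1.val - p.2.val) ≤ n := by omega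
            exact_mod_cast h2d'
          exact term_ub n hn0 S₀ hS0 p.1 p.2 _ (Or.inl hd) h2d
      _ = ∑ q ∈ (S.filter (fun p => ¬ p.1.val < p.2.val)).image ψ,
            (1 + (4 * S₀ / (n:ℝ)) ^ 2 * ((q.2:ℕ):ℝ) ^ 2)⁻¹ :=
          (Finset.sum_image (f := fun q : Fin n × ℕ =>
            (1 + (4 * S₀ / (n:ℝ)) ^ 2 * ((q.2:ℕ):ℝ) ^ 2)⁻¹) hinj).symm
      _ ≤ ∑ q ∈ Finset.univ ×ˢ Finset.Icc 1 (L - 1),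
            (1 + (4 * S₀ / (n:ℝ)) ^ 2 * ((q.2:ℕ):ℝ) ^ 2)⁻¹ := by
          apply Finset.sum_le_sum_of_subset_of_nonneg
          · intro q hq
            obtain ⟨p, hp, rfl⟩ := Finset.mem_image.mp hq
            have hmem := Finset.mem_filter.mp hp
            have hlt : p.2.val < p.1.val := hlt2 p hp
            have hdL : p.1.val - p.2.val < L := hdist' p hmem.1 hlt.le
            exact Finset.mem_product.mpr ⟨Finset.mem_univ _,
              Finset.mem_Icc.mpr ⟨Nat.sub_pos_of_lt hlt, Nat.le_pred_of_lt hdL⟩⟩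
          · intro q _ _; positivity
      _ = (n:ℝ) * ∑ d ∈ Finset.Icc 1 (L - 1),
            (1 + (4 * S₀ / (n:ℝ)) ^ 2 * (d:ℝ) ^ 2)⁻¹ := by
          rw [Finset.sum_product]
          simp only
          rw [Finset.sum_const, Finset.card_univ, Fintype.card_fin, nsmul_eq_mul]
      _ ≤ (n:ℝ) * (2 * (4 * S₀ / (n:ℝ))⁻¹) :=
          mul_le_mul_of_nonneg_left htel (le_of_lt hnr)
  have hsplit := Finset.sum_filter_add_sum_filter_not S
    (fun p : Fin n × Fin n => p.1.val < p.2.val)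
    (fun p : Fin n × Fin n => (1 + S₀ ^ 2 * ‖circlePt n p.1 - circlePt n p.2‖ ^ 2)⁻¹)
  have hfinal : (n:ℝ) * (2 * (4 * S₀ / (n:ℝ))⁻¹) + (n:ℝ) * (2 * (4 * S₀ / (n:ℝ))⁻¹)
      = 1 * ((n : ℝ) ^ 2 / S₀) := by
    field_simp
    ring
  rw [hE1, ← hsplit, ← hfinal]
  exact add_le_add hhalf1 hhalf2

/-- For the discrete circle `P_n` partitioned into `M` blocks of consecutive
indices, there exist constants `c₁, C₁ > 0` and `N` such that for all `n ≥ N`, all `M ∣ n`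
with `M ≥ 3`, and all `S₀` with `M ≤ S₀ ≤ n/10`, one has `c₁·n²/S₀ ≤ E₁ ≤ C₁·n²/S₀`. -/
theorem stmt12 :
    ∃ c₁ C₁ : ℝ, 0 < c₁ ∧ 0 < C₁ ∧ ∃ N : ℕ, ∀ n : ℕ, N ≤ n →
      ∀ M : ℕ, 3 ≤ M → M ∣ n →
      ∀ S₀ : ℝ, (M : ℝ) ≤ S₀ → S₀ ≤ (n : ℝ) / 10 →
        c₁ * ((n : ℝ) ^ 2 / S₀) ≤ E1 n M S₀ ∧
        E1 n M S₀ ≤ C₁ * ((n : ℝ) ^ 2 / S₀) := by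
  refine ⟨3/98, 1, by norm_num, one_pos, 0, ?_⟩
  intro n _ M hM hMn S₀ hMS hSn
  exact ⟨E1_lower n M hM hMn S₀ hMS hSn, E1_upper n M hM hMn S₀ hMS hSn⟩
end
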